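/- (Robustness of rational distributions.) Fix N ≥ 2, an integer q ≥ 2, and a real ε with 0 ≤ ε ≤ 1/q. Then for every triple (p, p̃, (i, j)) in the perturbed-pair family 𝒫_q(ε) and every state s, |p̃ s − p s| ≤ (q+1)ε; moreover the boundary states satisfy |p̃ i − p i| ≤ qε and |p̃ j − p j| ≤ qε. -/

import Mathlib

noncomputable section

/-- Series composition: distribution of `min` of two independent states. -/
def smin {N : ℕ} (p q : Fin N → ℝ) : Fin N → ℝ :=
  fun k => ∑ i, ∑ j, if min i j = k then p i * q j else 0

/-- Parallel composition: distribution of `max` of two independent states. -/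
def smax {N : ℕ} (p q : Fin N → ℝ) : Fin N → ℝ :=
  fun k => ∑ i, ∑ j, if max i j = k then p i * q j else 0

/-- The point mass at state `s`. -/
def delta {N : ℕ} (s : Fin N) : Fin N → ℝ := fun i => if i = s then 1 else 0

/-- The vector with value `a` at state `0`, `b` at state `N-1`, `0` elsewhere
(i.e. `a·δ₀ + b·δ_{N-1}` for `N ≥ 2`). -/
def endSwitch (N : ℕ) (a b : ℝ) : Fin N → ℝ :=
  fun i => (if (i : ℕ) = 0 then a else 0) + (if (i : ℕ) = N - 1 then b else 0)

/-- The perturbed-pair family `𝒫_q(ε)`: triples `(p, p̃, (i, j))`, where `p` is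
the ideal distribution built by the denominator reduction construction on
states `i, …, j` and `p̃` is the distribution of the same circuit in which each
pswitch `((q̂-1)/q̂)·δ₀ + (1/q̂)·δ_{N-1}` (for `2 ≤ q̂ ≤ q`) is perturbed to
`((q̂-1)/q̂ + ε̂)·δ₀ + (1/q̂ - ε̂)·δ_{N-1}` with `|ε̂| ≤ ε`. -/
inductive PertQ (N q : ℕ) (ε : ℝ) :
    (Fin N → ℝ) → (Fin N → ℝ) → Fin N → Fin N → Prop
  | point (s : Fin N) : PertQ N q ε (delta s) (delta s) s s
  | step {p p' u u' : Fin N → ℝ} {i k j : Fin N} {q' : ℕ} {ε' : ℝ} :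
      PertQ N q ε p p' i k → PertQ N q ε u u' k j →
      (∀ t, p t ≠ 0 → i ≤ t ∧ t ≤ k) → (∀ t, p' t ≠ 0 → i ≤ t ∧ t ≤ k) →
      (∀ t, u t ≠ 0 → k ≤ t ∧ t ≤ j) → (∀ t, u' t ≠ 0 → k ≤ t ∧ t ≤ j) →
      2 ≤ q' → q' ≤ q → |ε'| ≤ ε →
      PertQ N q ε
        (smax p (smin (endSwitch N (((q' : ℝ) - 1) / q') (1 / (q' : ℝ))) u))
        (smax p' (smin (endSwitch N (((q' : ℝ) - 1) / q' + ε') (1 / (q' : ℝ) - ε')) u')) i j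

lemma smin_endSwitch {n : ℕ} (A B : ℝ) (u : Fin (n+2) → ℝ) (y : Fin (n+2)) :
    smin (endSwitch (n+2) A B) u y
      = (if (0 : Fin (n+2)) = y then A * ∑ t, u t else 0) + B * u y := by
  unfold smin endSwitch
  have key : ∀ x t : Fin (n+2),
      (if min x t = y then ((if (x:ℕ) = 0 then A else 0) + (if (x:ℕ) = n+2-1 then B else 0)) * u t else 0)
      = (if x = 0 then (if (0 : Fin (n+2)) = y then A * u t else 0) else 0)
        + (if x = Fin.last (n+1) then (if t = y then B * u t else 0) else 0) := by
    intro x t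
    by_cases hx0 : x = 0
    · subst hx0
      have h1 : ((0 : Fin (n+2)) : ℕ) ≠ n + 2 - 1 := by simp
      have hmin : min (0 : Fin (n+2)) t = 0 := min_eq_left (Fin.zero_le t)
      rw [hmin]
      have h0 : (0 : Fin (n+2)) ≠ Fin.last (n+1) := by
        simp [Fin.ext_iff]
      simp [h1, h0]
    · by_cases hxl : x = Fin.last (n+1)
      · subst hxl
        have h1 : ((Fin.last (n+1) : Fin (n+2)) : ℕ) ≠ 0 := by simp
        have hmin : min (Fin.last (n+1)) t = t := min_eq_right (Fin.le_last t)
        rw [hmin]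
        simp [h1, hx0]
      · have h1 : ((x : Fin (n+2)) : ℕ) ≠ 0 := by
          exact fun h => hx0 (Fin.ext (by simp [h]))
        have h2 : ((x : Fin (n+2)) : ℕ) ≠ n + 1 := by
          simpa [Fin.ext_iff] using hxl
        simp [h1, h2, hx0, hxl]
  simp_rw [key, Finset.sum_add_distrib]
  have S1 : (∑ x : Fin (n+2), ∑ t : Fin (n+2),
      (if x = 0 then (if (0 : Fin (n+2)) = y then A * u t else 0) else 0))
      = (if (0 : Fin (n+2)) = y then A * ∑ t, u t else 0) := by
    rw [Finset.sum_comm]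
    simp_rw [Finset.sum_ite_eq', Finset.mem_univ, if_true]
    by_cases h : (0 : Fin (n+2)) = y <;> simp [h, Finset.mul_sum]
  have S2 : (∑ x : Fin (n+2), ∑ t : Fin (n+2),
      (if x = Fin.last (n+1) then (if t = y then B * u t else 0) else 0)) = B * u y := by
    rw [Finset.sum_comm]
    simp_rw [Finset.sum_ite_eq', Finset.mem_univ, if_true]
    simp
  rw [S1, S2]

lemma smax_support_right {N : ℕ} {p u : Fin N → ℝ} {k : Fin N}
    (hp : ∀ t, p t ≠ 0 → t ≤ k) (hu : ∀ t, u t ≠ 0 → k ≤ t)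
    (hps : ∑ t, p t = 1) (s : Fin N) : smax p u s = u s := by
  unfold smax
  have h1 : ∀ x y : Fin N, (if max x y = s then p x * u y else 0)
      = if y = s then p x * u y else 0 := by
    intro x y
    by_cases hx : p x = 0
    · simp [hx]
    · by_cases hy : u y = 0
      · simp [hy]
      · rw [max_eq_right ((hp x hx).trans (hu y hy))]
  simp_rw [h1, Finset.sum_ite_eq', Finset.mem_univ, if_true, ← Finset.sum_mul, hps, one_mul]

lemma compose_eq {n : ℕ} (A B : ℝ) {p u : Fin (n+2) → ℝ} {k : Fin (n+2)}
    (hp : ∀ t, p t ≠ 0 → t ≤ k) (hu : ∀ t, u t ≠ 0 → k ≤ t)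
    (hps : ∑ t, p t = 1) (hus : ∑ t, u t = 1) (s : Fin (n+2)) :
    smax p (smin (endSwitch (n+2) A B) u) s = A * p s + B * u s := by
  have hv : ∀ y, smin (endSwitch (n+2) A B) u y
      = (if (0:Fin (n+2)) = y then A else 0) + B * u y := by
    intro y; rw [smin_endSwitch, hus, mul_one]
  show (∑ x, ∑ t, if max x t = s then p x * smin (endSwitch (n+2) A B) u t else 0) = _
  simp_rw [hv]
  have key : ∀ x t : Fin (n+2),
      (if max x t = s then p x * ((if (0:Fin (n+2)) = t then A else 0) + B * u t) else 0)
      = (if t = 0 then (if x = s then p x * A else 0) else 0)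
        + (if max x t = s then B * (p x * u t) else 0) := by
    intro x t
    by_cases ht : t = 0
    · subst ht
      have hmax : max x (0 : Fin (n+2)) = x := max_eq_left (Fin.zero_le x)
      rw [hmax]
      by_cases hx : x = s <;> simp [hx] <;> ring
    · have h0 : (0 : Fin (n+2)) ≠ t := fun h => ht h.symm
      simp only [if_neg h0, if_neg ht, zero_add]
      split <;> ring
  simp_rw [key, Finset.sum_add_distrib]
  have S1 : (∑ x : Fin (n+2), ∑ t : Fin (n+2),
      (if t = 0 then (if x = s then p x * A else 0) else 0)) = A * p s := by
    simp_rw [Finset.sum_ite_eq', Finset.mem_univ, if_true]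
    rw [Finset.sum_ite_eq']
    simp [mul_comm]
  have S2 : (∑ x : Fin (n+2), ∑ t : Fin (n+2),
      (if max x t = s then B * (p x * u t) else 0)) = B * u s := by
    have e : ∀ x t : Fin (n+2), (if max x t = s then B * (p x * u t) else 0)
        = B * (if max x t = s then p x * u t else 0) := by
      intro x t; rw [mul_ite, mul_zero]
    simp_rw [e, ← Finset.mul_sum]
    rw [show (∑ x, ∑ t, if max x t = s then p x * u t else 0) = smax p u s from rfl,
        smax_support_right hp hu hps s]
  rw [S1, S2]

set_option maxHeartbeats 1000000 in
theorem keyLemma {n q : ℕ} (hq : 2 ≤ q) {ε : ℝ} (hε0 : 0 ≤ ε) (hε : ε ≤ 1 / (q : ℝ))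
    {p p' : Fin (n+2) → ℝ} {i j : Fin (n+2)} (h : PertQ (n+2) q ε p p' i j) :
    (∀ s, 0 ≤ p s) ∧ (∀ s, 0 ≤ p' s) ∧ (∑ s, p s) = 1 ∧ (∑ s, p' s) = 1 ∧
    (∀ s, |p' s - p s| ≤ ((q:ℝ)+1) * ε) ∧ |p' i - p i| ≤ (q:ℝ) * ε ∧
    |p' j - p j| ≤ (q:ℝ) * ε := by
  have hq2 : (2:ℝ) ≤ (q:ℝ) := by exact_mod_cast hq
  have hq0 : (0:ℝ) < (q:ℝ) := by linarith
  induction h with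
  | point s =>
      have h0 : ∀ t, (0:ℝ) ≤ delta s t := by
        intro t; unfold delta; split <;> norm_num
      have h1 : (∑ t, delta s t) = 1 := by
        unfold delta; rw [Finset.sum_ite_eq']; simp
      have h2 : ∀ t : Fin (n+2), |delta s t - delta s t| ≤ ((q:ℝ)+1) * ε := by
        intro t; simp; positivity
      have h3 : |delta s s - delta s s| ≤ (q:ℝ) * ε := by simp; positivity
      exact ⟨h0, h0, h1, h1, h2, h3, h3⟩
  | @step p p' u u' i k j q' ε' h1 h2 hsp hsp' hsu hsu' h2q hq'le habs ih1 ih2 =>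
      obtain ⟨hp0, hp'0, hpsum, hp'sum, hpall, hpi, hpk⟩ := ih1
      obtain ⟨hu0, hu'0, husum, hu'sum, huall, huk, huj⟩ := ih2
      set A : ℝ := ((q':ℝ) - 1) / q' with hAdef
      set B : ℝ := 1 / (q':ℝ) with hBdef
      have hq'2 : (2:ℝ) ≤ (q':ℝ) := by exact_mod_cast h2q
      have hq'q : (q':ℝ) ≤ (q:ℝ) := by exact_mod_cast hq'le
      have hq'0 : (0:ℝ) < (q':ℝ) := by linarith
      have hAB : A + B = 1 := by rw [hAdef, hBdef]; field_simp; ring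
      have hB0 : 0 ≤ B := by rw [hBdef]; positivity
      have hBq : 1/(q:ℝ) ≤ B := by
        rw [hBdef]; exact one_div_le_one_div_of_le hq'0 hq'q
      have hB2 : B ≤ 1/2 := by
        rw [hBdef]; exact one_div_le_one_div_of_le (by norm_num) hq'2
      have hB1 : B ≤ 1 := by linarith
      have hA0 : 0 ≤ A := by linarith
      have hA1 : A ≤ 1 := by linarith
      have hε'1 : -ε ≤ ε' := (abs_le.mp habs).1
      have hε'2 : ε' ≤ ε := (abs_le.mp habs).2
      have hεhalf : ε ≤ 1/2 := by
        have : 1/(q:ℝ) ≤ 1/2 := one_div_le_one_div_of_le (by norm_num) hq2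
        linarith
      have hA'0 : 0 ≤ A + ε' := by linarith
      have hB'0 : 0 ≤ B - ε' := by linarith
      have hBq' : 1 ≤ B * (q:ℝ) := by
        rw [div_le_iff₀ hq0] at hBq; linarith
      have hεq : ε * (q:ℝ) ≤ 1 := by
        rw [le_div_iff₀ hq0] at hε; linarith
      -- the two composition identities
      have e1 : ∀ s, smax p (smin (endSwitch (n+2) A B) u) s = A * p s + B * u s :=
        compose_eq A B (fun t ht => (hsp t ht).2) (fun t ht => (hsu t ht).1) hpsum husum
      have e2 : ∀ s, smax p' (smin (endSwitch (n+2) (A + ε') (B - ε')) u') s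
          = (A + ε') * p' s + (B - ε') * u' s :=
        compose_eq (A + ε') (B - ε') (fun t ht => (hsp' t ht).2) (fun t ht => (hsu' t ht).1)
          hp'sum hu'sum
      -- basic consequences
      have hple : ∀ s, p s ≤ 1 := by
        intro s
        have := Finset.single_le_sum (f := p) (fun t _ => hp0 t) (Finset.mem_univ s)
        rwa [hpsum] at this
      have hp'le : ∀ s, p' s ≤ 1 := by
        intro s
        have := Finset.single_le_sum (f := p') (fun t _ => hp'0 t) (Finset.mem_univ s)
        rwa [hp'sum] at this
      have hule : ∀ s, u s ≤ 1 := by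
        intro s
        have := Finset.single_le_sum (f := u) (fun t _ => hu0 t) (Finset.mem_univ s)
        rwa [husum] at this
      have hu'le : ∀ s, u' s ≤ 1 := by
        intro s
        have := Finset.single_le_sum (f := u') (fun t _ => hu'0 t) (Finset.mem_univ s)
        rwa [hu'sum] at this
      have hik : i ≤ k := by
        obtain ⟨t, -, ht⟩ := Finset.exists_ne_zero_of_sum_ne_zero
          (by rw [hpsum]; norm_num : (∑ t, p t) ≠ 0)
        exact (hsp t ht).1.trans (hsp t ht).2
      have hkj : k ≤ j := by
        obtain ⟨t, -, ht⟩ := Finset.exists_ne_zero_of_sum_ne_zero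
          (by rw [husum]; norm_num : (∑ t, u t) ≠ 0)
        exact (hsu t ht).1.trans (hsu t ht).2
      refine ⟨?_, ?_, ?_, ?_, ?_, ?_, ?_⟩
      · intro s; rw [e1 s]
        have := mul_nonneg hA0 (hp0 s); have := mul_nonneg hB0 (hu0 s); linarith
      · intro s; rw [e2 s]
        have := mul_nonneg hA'0 (hp'0 s); have := mul_nonneg hB'0 (hu'0 s); linarith
      · rw [Finset.sum_congr rfl fun s _ => e1 s, Finset.sum_add_distrib,
          ← Finset.mul_sum, ← Finset.mul_sum, hpsum, husum]
        linarith
      · rw [Finset.sum_congr rfl fun s _ => e2 s, Finset.sum_add_distrib,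
          ← Finset.mul_sum, ← Finset.mul_sum, hp'sum, hu'sum]
        linarith
      · -- global (q+1)ε bound
        intro s
        rw [e1 s, e2 s]
        rcases lt_trichotomy s k with hsk | hsk | hsk
        · have hus : u s = 0 := by
            by_contra hc; exact absurd (hsu s hc).1 (not_le.mpr hsk)
          have hu's : u' s = 0 := by
            by_contra hc; exact absurd (hsu' s hc).1 (not_le.mpr hsk)
          have heq : (A + ε') * p' s + (B - ε') * u' s - (A * p s + B * u s)
              = A * (p' s - p s) + ε' * p' s := by rw [hus, hu's]; ring
          rw [heq]
          calc |A * (p' s - p s) + ε' * p' s|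
              ≤ |A * (p' s - p s)| + |ε' * p' s| := abs_add_le _ _
            _ = A * |p' s - p s| + |ε'| * p' s := by
                rw [abs_mul, abs_mul, abs_of_nonneg hA0, abs_of_nonneg (hp'0 s)]
            _ ≤ ((q:ℝ)+1) * ε := by
                nlinarith [hpall s, abs_nonneg (p' s - p s), hp'0 s, hp'le s, habs,
                  abs_nonneg ε', mul_nonneg hε0 hB0,
                  mul_nonneg hA0 (sub_nonneg.mpr (hpall s)),
                  mul_nonneg hε0 (sub_nonneg.mpr (hp'le s)),
                  mul_nonneg hε0 (sub_nonneg.mpr hBq')]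
        · subst hsk
          have heq : (A + ε') * p' s + (B - ε') * u' s - (A * p s + B * u s)
              = A * (p' s - p s) + B * (u' s - u s) + ε' * (p' s - u' s) := by ring
          rw [heq]
          have habs3 : |A * (p' s - p s) + B * (u' s - u s) + ε' * (p' s - u' s)|
              ≤ A * |p' s - p s| + B * |u' s - u s| + |ε'| * |p' s - u' s| := by
            calc _ ≤ |A * (p' s - p s) + B * (u' s - u s)| + |ε' * (p' s - u' s)| := abs_add_le _ _
              _ ≤ |A * (p' s - p s)| + |B * (u' s - u s)| + |ε' * (p' s - u' s)| := by
                  have := abs_add_le (A * (p' s - p s)) (B * (u' s - u s)); linarith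
              _ = _ := by
                  rw [abs_mul, abs_mul, abs_mul, abs_of_nonneg hA0, abs_of_nonneg hB0]
          have hpu1 : |p' s - u' s| ≤ 1 :=
            abs_le.mpr ⟨by linarith [hp'0 s, hu'le s], by linarith [hu'0 s, hp'le s]⟩
          have h1' : A * |p' s - p s| ≤ A * ((q:ℝ) * ε) :=
            mul_le_mul_of_nonneg_left hpk hA0
          have h2' : B * |u' s - u s| ≤ B * ((q:ℝ) * ε) :=
            mul_le_mul_of_nonneg_left huk hB0
          have h3' : |ε'| * |p' s - u' s| ≤ ε := by
            nlinarith [abs_nonneg ε', abs_nonneg (p' s - u' s)]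
          nlinarith [habs3, h1', h2', h3', hεq, mul_nonneg hε0 hq0.le]
        · have hps : p s = 0 := by
            by_contra hc; exact absurd (hsp s hc).2 (not_le.mpr hsk)
          have hp's : p' s = 0 := by
            by_contra hc; exact absurd (hsp' s hc).2 (not_le.mpr hsk)
          have heq : (A + ε') * p' s + (B - ε') * u' s - (A * p s + B * u s)
              = B * (u' s - u s) + (-ε') * u' s := by rw [hps, hp's]; ring
          rw [heq]
          calc |B * (u' s - u s) + (-ε') * u' s|
              ≤ |B * (u' s - u s)| + |(-ε') * u' s| := abs_add_le _ _
            _ = B * |u' s - u s| + |ε'| * u' s := by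
                rw [abs_mul, abs_mul, abs_of_nonneg hB0, abs_neg, abs_of_nonneg (hu'0 s)]
            _ ≤ ((q:ℝ)+1) * ε := by
                nlinarith [huall s, abs_nonneg (u' s - u s), hu'0 s, hu'le s, habs,
                  abs_nonneg ε', mul_nonneg hε0 hB0,
                  mul_nonneg (sub_nonneg.mpr hB2) (sub_nonneg.mpr (huall s)),
                  mul_nonneg hε0 (sub_nonneg.mpr (hu'le s)),
                  mul_nonneg hε0 (sub_nonneg.mpr hBq')]
      · -- boundary i
        rw [e1 i, e2 i]
        rcases eq_or_lt_of_le hik with hik' | hik'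
        · -- i = k : p is the point mass at k
          have hsupp : ∀ t, p t ≠ 0 → t = i := fun t ht =>
            le_antisymm (hik' ▸ (hsp t ht).2) (hsp t ht).1
          have hsupp' : ∀ t, p' t ≠ 0 → t = i := fun t ht =>
            le_antisymm (hik' ▸ (hsp' t ht).2) (hsp' t ht).1
          have hpk1 : p i = 1 := by
            rw [← hpsum]
            exact (Finset.sum_eq_single_of_mem i (Finset.mem_univ i)
              (fun t _ htne => by
                by_contra hft; exact htne (hsupp t hft))).symm
          have hp'k1 : p' i = 1 := by
            rw [← hp'sum]
            exact (Finset.sum_eq_single_of_mem i (Finset.mem_univ i)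
              (fun t _ htne => by
                by_contra hft; exact htne (hsupp' t hft))).symm
          have heq : (A + ε') * p' i + (B - ε') * u' i - (A * p i + B * u i)
              = B * (u' i - u i) + ε' * (1 - u' i) := by rw [hpk1, hp'k1]; ring
          rw [heq]
          have hEi : |u' i - u i| ≤ (q:ℝ) * ε := hik' ▸ huk
          calc |B * (u' i - u i) + ε' * (1 - u' i)|
              ≤ |B * (u' i - u i)| + |ε' * (1 - u' i)| := abs_add_le _ _
            _ = B * |u' i - u i| + |ε'| * |1 - u' i| := by
                rw [abs_mul, abs_mul, abs_of_nonneg hB0]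
            _ ≤ (q:ℝ) * ε := by
                have h1u : |1 - u' i| ≤ 1 :=
                  abs_le.mpr ⟨by linarith [hu'le i], by linarith [hu'0 i]⟩
                nlinarith [abs_nonneg (u' i - u i), abs_nonneg ε',
                  abs_nonneg (1 - u' i), mul_nonneg hε0 hq0.le,
                  mul_nonneg (sub_nonneg.mpr hB2) (sub_nonneg.mpr hEi)]
        · -- i < k
          have hui : u i = 0 := by
            by_contra hc; exact absurd (hsu i hc).1 (not_le.mpr hik')
          have hu'i : u' i = 0 := by
            by_contra hc; exact absurd (hsu' i hc).1 (not_le.mpr hik')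
          have heq : (A + ε') * p' i + (B - ε') * u' i - (A * p i + B * u i)
              = A * (p' i - p i) + ε' * p' i := by rw [hui, hu'i]; ring
          rw [heq]
          calc |A * (p' i - p i) + ε' * p' i|
              ≤ |A * (p' i - p i)| + |ε' * p' i| := abs_add_le _ _
            _ = A * |p' i - p i| + |ε'| * p' i := by
                rw [abs_mul, abs_mul, abs_of_nonneg hA0, abs_of_nonneg (hp'0 i)]
            _ ≤ (q:ℝ) * ε := by
                nlinarith [hpi, abs_nonneg (p' i - p i), hp'0 i, hp'le i,
                  abs_nonneg ε', mul_nonneg hε0 hB0,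
                  mul_nonneg hA0 (sub_nonneg.mpr hpi),
                  mul_nonneg hε0 (sub_nonneg.mpr (hp'le i)),
                  mul_nonneg hε0 (sub_nonneg.mpr hBq')]
      · -- boundary j
        rw [e1 j, e2 j]
        rcases eq_or_lt_of_le hkj with hkj' | hkj'
        · -- k = j : u is the point mass at j
          have hsupp : ∀ t, u t ≠ 0 → t = j := fun t ht =>
            le_antisymm (hsu t ht).2 (hkj' ▸ (hsu t ht).1)
          have hsupp' : ∀ t, u' t ≠ 0 → t = j := fun t ht =>
            le_antisymm (hsu' t ht).2 (hkj' ▸ (hsu' t ht).1)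
          have huj1 : u j = 1 := by
            rw [← husum]
            exact (Finset.sum_eq_single_of_mem j (Finset.mem_univ j)
              (fun t _ htne => by
                by_contra hft; exact htne (hsupp t hft))).symm
          have hu'j1 : u' j = 1 := by
            rw [← hu'sum]
            exact (Finset.sum_eq_single_of_mem j (Finset.mem_univ j)
              (fun t _ htne => by
                by_contra hft; exact htne (hsupp' t hft))).symm
          have heq : (A + ε') * p' j + (B - ε') * u' j - (A * p j + B * u j)
              = A * (p' j - p j) + ε' * (p' j - 1) := by rw [huj1, hu'j1]; ring
          rw [heq]
          have hDj : |p' j - p j| ≤ (q:ℝ) * ε := hkj' ▸ hpk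
          calc |A * (p' j - p j) + ε' * (p' j - 1)|
              ≤ |A * (p' j - p j)| + |ε' * (p' j - 1)| := abs_add_le _ _
            _ = A * |p' j - p j| + |ε'| * |p' j - 1| := by
                rw [abs_mul, abs_mul, abs_of_nonneg hA0]
            _ ≤ (q:ℝ) * ε := by
                have h1p : |p' j - 1| ≤ 1 :=
                  abs_le.mpr ⟨by linarith [hp'0 j], by linarith [hp'le j]⟩
                nlinarith [abs_nonneg (p' j - p j), abs_nonneg ε',
                  abs_nonneg (p' j - 1), mul_nonneg hε0 hB0,
                  mul_nonneg hA0 (sub_nonneg.mpr hDj),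
                  mul_nonneg hε0 (sub_nonneg.mpr hBq')]
        · -- k < j
          have hpj : p j = 0 := by
            by_contra hc; exact absurd (hsp j hc).2 (not_le.mpr hkj')
          have hp'j : p' j = 0 := by
            by_contra hc; exact absurd (hsp' j hc).2 (not_le.mpr hkj')
          have heq : (A + ε') * p' j + (B - ε') * u' j - (A * p j + B * u j)
              = B * (u' j - u j) + (-ε') * u' j := by rw [hpj, hp'j]; ring
          rw [heq]
          calc |B * (u' j - u j) + (-ε') * u' j|
              ≤ |B * (u' j - u j)| + |(-ε') * u' j| := abs_add_le _ _
            _ = B * |u' j - u j| + |ε'| * u' j := by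
                rw [abs_mul, abs_mul, abs_of_nonneg hB0, abs_neg, abs_of_nonneg (hu'0 j)]
            _ ≤ (q:ℝ) * ε := by
                nlinarith [huj, abs_nonneg (u' j - u j), hu'0 j, hu'le j,
                  abs_nonneg ε', mul_nonneg hε0 hB0,
                  mul_nonneg (sub_nonneg.mpr hB2) (sub_nonneg.mpr huj),
                  mul_nonneg hε0 (sub_nonneg.mpr (hu'le j)),
                  mul_nonneg hε0 (sub_nonneg.mpr hBq')]

/-- Robustness of rational distributions: for every `(p, p̃, (i, j))` in
`𝒫_q(ε)`, every state has error at most `(q+1)ε`, and the boundary states `i`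
and `j` have error at most `qε`. -/
theorem robustness_rational (N : ℕ) (hN : 2 ≤ N) (q : ℕ) (hq : 2 ≤ q)
    (ε : ℝ) (hε0 : 0 ≤ ε) (hε : ε ≤ 1 / (q : ℝ))
    (p p' : Fin N → ℝ) (i j : Fin N) (h : PertQ N q ε p p' i j) :
    (∀ s : Fin N, |p' s - p s| ≤ ((q : ℝ) + 1) * ε) ∧
    |p' i - p i| ≤ (q : ℝ) * ε ∧ |p' j - p j| ≤ (q : ℝ) * ε := by
  obtain ⟨n, rfl⟩ : ∃ n, N = n + 2 := ⟨N - 2, by omega⟩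
  obtain ⟨-, -, -, -, h5, h6, h7⟩ := keyLemma hq hε0 hε h
  exact ⟨h5, h6, h7⟩
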